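/- If D is a countably based complete chain with no compact elements other than ⊥, then the family SProb(D) of Scott-continuous sub-probability measures on D, ordered by μ ≤ ν iff μ(U) ≤ ν(U) for all Scott-open U, is a continuous lattice. -/

import Mathlib

open MeasureTheory

/-- A set is Scott open if it is an upper set and every directed set whose supremum
lies in it meets it. -/
def ScottOpen {α : Type*} [Preorder α] (U : Set α) : Prop :=
  IsUpperSet U ∧ ∀ S : Set α, S.Nonempty → DirectedOn (· ≤ ·) S →
    ∀ d : α, IsLUB S d → d ∈ U → (S ∩ U).Nonempty

/-- `x` is way below `y`. -/
def WayBelow {α : Type*} [Preorder α] (x y : α) : Prop :=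
  ∀ S : Set α, S.Nonempty → DirectedOn (· ≤ ·) S → ∀ d : α, IsLUB S d → y ≤ d → ∃ s ∈ S, x ≤ s

/-- The Scott-continuous sub-probability Borel measures on `D`. -/
def SProb (D : Type*) [Preorder D] : Type _ :=
  {μ : @Measure D (MeasurableSpace.generateFrom {U : Set D | ScottOpen U}) //
    μ Set.univ ≤ 1 ∧ ∀ 𝒰 : Set (Set D), (∀ U ∈ 𝒰, ScottOpen U) → 𝒰.Nonempty →
      DirectedOn (· ⊆ ·) 𝒰 → μ (⋃₀ 𝒰) = ⨆ U ∈ 𝒰, μ U}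

/-- The stochastic order on sub-probability measures: comparison on Scott-open sets. -/
def SProbLe {D : Type*} [Preorder D] (μ ν : SProb D) : Prop :=
  ∀ U : Set D, ScottOpen U → μ.val U ≤ ν.val U

/-- Least upper bound with respect to an explicit relation. -/
def IsLubRel {α : Type*} (le : α → α → Prop) (S : Set α) (m : α) : Prop :=
  (∀ s ∈ S, le s m) ∧ ∀ b : α, (∀ s ∈ S, le s b) → le m b

/-- Greatest lower bound with respect to an explicit relation. -/
def IsGlbRel {α : Type*} (le : α → α → Prop) (S : Set α) (m : α) : Prop :=
  (∀ s ∈ S, le m s) ∧ ∀ b : α, (∀ s ∈ S, le b s) → le b m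

/-- The way-below relation with respect to an explicit relation. -/
def WayBelowRel {α : Type*} (le : α → α → Prop) (x y : α) : Prop :=
  ∀ S : Set α, S.Nonempty → DirectedOn le S → ∀ d : α, IsLubRel le S d → le y d → ∃ s ∈ S, le x s

section Aux
open Set
variable {D : Type*} [CompleteLinearOrder D]

theorem chain_directedOn (S : Set D) : DirectedOn (· ≤ ·) S := fun a ha b hb => by
  rcases le_total a b with h | h
  · exact ⟨b, hb, h, le_rfl⟩
  · exact ⟨a, ha, le_rfl, h⟩

theorem scottOpen_Ioi (x : D) : ScottOpen (Ioi x) := by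
  refine ⟨fun a b hab ha => lt_of_lt_of_le ha hab, fun S hS _ d hd hdx => ?_⟩
  by_contra h
  rw [Set.not_nonempty_iff_eq_empty, Set.eq_empty_iff_forall_notMem] at h
  have : d ≤ x := hd.2 fun s hs => le_of_not_gt fun hlt => h s ⟨hs, hlt⟩
  exact absurd (lt_of_lt_of_le hdx this) (lt_irrefl x)

theorem scottOpen_univ : ScottOpen (univ : Set D) :=
  ⟨fun _ _ _ _ => trivial, fun S hS _ _ _ _ => hS.mono (by simp)⟩

theorem scottOpen_iff {U : Set D} : ScottOpen U ↔ U = univ ∨ ∃ x, U = Ioi x := by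
  constructor
  · intro hU
    by_cases huniv : U = univ
    · exact Or.inl huniv
    right
    obtain ⟨a, ha⟩ := (ne_univ_iff_exists_notMem U).1 huniv
    refine ⟨sSup Uᶜ, subset_antisymm (fun y hy => ?_) (fun y hy => ?_)⟩
    · by_contra hle
      rw [mem_Ioi, not_lt] at hle
      rcases hle.lt_or_eq with hlt | heq
      · obtain ⟨z, hz, hyz⟩ := lt_sSup_iff.1 hlt
        exact hz (hU.1 hyz.le hy)
      · obtain ⟨s, hs⟩ := hU.2 Uᶜ ⟨a, ha⟩ (chain_directedOn _) y
          (by rw [heq]; exact isLUB_sSup _) hy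
        exact hs.1 hs.2
    · by_contra hyU
      exact absurd (le_sSup (s := Uᶜ) hyU) (not_le.2 hy)
  · rintro (rfl | ⟨x, rfl⟩)
    · exact scottOpen_univ
    · exact scottOpen_Ioi x

theorem biUnion_Ioi (A : Set D) : ⋃ x ∈ A, Ioi x = Ioi (sInf A) := by
  ext y
  simp only [mem_iUnion, mem_Ioi, exists_prop]
  exact ⟨fun ⟨x, hx, hxy⟩ => lt_of_le_of_lt (sInf_le hx) hxy, fun h => sInf_lt_iff.1 h⟩

theorem IsLowerSet.measurableSet_real {s : Set ℝ} (hs : IsLowerSet s) : MeasurableSet s := by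
  rcases eq_empty_or_nonempty s with rfl | hne
  · exact .empty
  by_cases hu : s = univ
  · rw [hu]; exact .univ
  obtain ⟨u, hu⟩ := (ne_univ_iff_exists_notMem s).1 hu
  have hbdd : BddAbove s := ⟨u, fun y hy => le_of_not_gt fun h => hu (hs h.le hy)⟩
  have h1 : Iio (sSup s) ⊆ s := fun t ht => by
    obtain ⟨l, hl, hlt⟩ := exists_lt_of_lt_csSup hne ht
    exact hs hlt.le hl
  have h2 : s ⊆ Iic (sSup s) := fun t ht => le_csSup hbdd ht
  by_cases hmem : sSup s ∈ s
  · have hset : s = Iic (sSup s) := by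
      refine subset_antisymm h2 fun t ht => ?_
      rw [mem_Iic] at ht
      rcases ht.lt_or_eq with h | h
      · exact h1 h
      · rwa [h]
    rw [hset]; exact measurableSet_Iic
  · have hset : s = Iio (sSup s) := by
      refine subset_antisymm (fun t ht => ?_) h1
      have h3 := h2 ht
      rw [mem_Iic] at h3
      rcases h3.lt_or_eq with h | h
      · exact h
      · exact absurd (h ▸ ht) hmem
    rw [hset]; exact measurableSet_Iio

end Aux

namespace SP
open Set MeasureTheory ENNReal

abbrev scottMS (D : Type*) [Preorder D] : MeasurableSpace D :=
  MeasurableSpace.generateFrom {U : Set D | ScottOpen U}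

variable {D : Type*} [CompleteLinearOrder D]

theorem msOpen {U : Set D} (hU : ScottOpen U) : MeasurableSet[scottMS D] U :=
  MeasurableSpace.measurableSet_generateFrom hU

theorem msIoi (x : D) : MeasurableSet[scottMS D] (Ioi x) := msOpen (scottOpen_Ioi x)

/-- left-continuity (Scott continuity) property of a candidate CCDF. -/
def LCf (f : D → ℝ≥0∞) : Prop := ∀ x : D, sInf (Ioi x) = x → f x = ⨆ z ∈ Ioi x, f z

/-- quantile function -/
noncomputable def qf (f : D → ℝ≥0∞) : ℝ → D := fun t => sInf {z | f z < ENNReal.ofReal t}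

theorem antitone_qf (f : D → ℝ≥0∞) : Antitone (qf f) := fun a b hab =>
  sInf_le_sInf fun z hz => lt_of_lt_of_le hz (ofReal_le_ofReal hab)

theorem measurable_qf (f : D → ℝ≥0∞) : @Measurable ℝ D _ (scottMS D) (qf f) := by
  refine measurable_generateFrom fun U hU => ?_
  refine IsLowerSet.measurableSet_real fun a b hba ha => ?_
  exact hU.1 (antitone_qf f hba) ha

noncomputable def Phi (f : D → ℝ≥0∞) (c : ℝ≥0∞) : @Measure D (scottMS D) :=
  @Measure.map ℝ D _ (scottMS D) (qf f) (volume.restrict (Ioc 0 c.toReal))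

variable {f : D → ℝ≥0∞} {c : ℝ≥0∞}

theorem Phi_apply_univ (hc : c ≠ ∞) : Phi f c univ = c := by
  rw [Phi, Measure.map_apply (measurable_qf f) MeasurableSet.univ, preimage_univ,
    Measure.restrict_apply MeasurableSet.univ, univ_inter, Real.volume_Ioc,
    sub_zero, ofReal_toReal hc]

theorem Phi_apply_Ioi (ha : Antitone f) (hlc : LCf f) (hfc : f ⊥ ≤ c) (hc1 : c ≤ 1) (x : D) :
    Phi f c (Ioi x) = f x := by
  have hcne : c ≠ ∞ := (hc1.trans_lt one_lt_top).ne
  have hfxc : f x ≤ c := (ha bot_le).trans hfc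
  have hfx : f x ≠ ∞ := (hfxc.trans_lt (hc1.trans_lt one_lt_top)).ne
  set m := (f x).toReal with hm
  rw [Phi, Measure.map_apply (measurable_qf f) (msIoi x),
    Measure.restrict_apply ((measurable_qf f) (msIoi x))]
  have h2 : qf f ⁻¹' Ioi x ∩ Ioc 0 c.toReal ⊆ Ioc 0 m := by
    rintro t ⟨ht1, ht2, _⟩
    refine ⟨ht2, ?_⟩
    by_contra hmt
    rw [not_le] at hmt
    have : f x < ENNReal.ofReal t := by
      calc f x = ENNReal.ofReal m := (ofReal_toReal hfx).symm
      _ < ENNReal.ofReal t := (ofReal_lt_ofReal_iff_of_nonneg toReal_nonneg).2 hmt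
    exact absurd (sInf_le this : qf f t ≤ x) (not_le.2 ht1)
  have h1 : Ioo 0 m ⊆ qf f ⁻¹' Ioi x ∩ Ioc 0 c.toReal := by
    rintro t ⟨ht0, htm⟩
    have htf : ENNReal.ofReal t < f x := by
      calc ENNReal.ofReal t < ENNReal.ofReal m :=
        (ofReal_lt_ofReal_iff_of_nonneg ht0.le).2 htm
      _ = f x := ofReal_toReal hfx
    have hmem : ∀ z ∈ {z : D | f z < ENNReal.ofReal t}, x < z := by
      intro z hz
      by_contra hzx
      rw [not_lt] at hzx
      exact absurd (lt_of_le_of_lt (htf.trans_le (ha hzx)).le hz) (lt_irrefl _)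
    refine ⟨?_, ht0, htm.le.trans (toReal_mono hcne hfxc)⟩
    rw [mem_preimage, mem_Ioi]
    rcases (le_sInf fun z hz => (hmem z hz).le : x ≤ qf f t).lt_or_eq with h | heq
    · exact h
    exfalso
    have hsub : {z : D | f z < ENNReal.ofReal t} ⊆ Ioi x := fun z hz => hmem z hz
    have hIoi : sInf (Ioi x) = x :=
      le_antisymm ((sInf_le_sInf hsub).trans heq.symm.le) (le_sInf fun z hz => hz.le)
    have hle : f x ≤ ENNReal.ofReal t := by
      rw [hlc x hIoi]
      refine iSup₂_le fun z hz => ?_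
      obtain ⟨w, hw, hwz⟩ := sInf_lt_iff.1
        (show sInf {z : D | f z < ENNReal.ofReal t} < z from heq ▸ hz)
      exact (ha hwz.le).trans hw.le
    exact absurd (htf.trans_le hle) (lt_irrefl _)
  refine le_antisymm ?_ ?_
  · calc volume (qf f ⁻¹' Ioi x ∩ Ioc 0 c.toReal) ≤ volume (Ioc 0 m) := measure_mono h2
    _ = ENNReal.ofReal m := by rw [Real.volume_Ioc, sub_zero]
    _ = f x := ofReal_toReal hfx
  · calc f x = ENNReal.ofReal m := (ofReal_toReal hfx).symm
    _ = volume (Ioo 0 m) := by rw [Real.volume_Ioo, sub_zero]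
    _ ≤ _ := measure_mono h1

end SP

namespace SP2
open Set MeasureTheory ENNReal SP

variable {D : Type*} [CompleteLinearOrder D]

theorem lcf_biInf {f : D → ℝ≥0∞} (ha : Antitone f) (hlc : SP.LCf f) (A : Set D) :
    f (sInf A) = ⨆ x ∈ A, f x := by
  by_cases h : sInf A ∈ A
  · exact le_antisymm (le_biSup f h) (iSup₂_le fun x hx => ha (sInf_le hx))
  · have hsub : A ⊆ Ioi (sInf A) := by
      intro x hx
      refine (sInf_le hx).lt_of_ne fun e => h ?_
      rw [e]; exact hx
    have hIoi : sInf (Ioi (sInf A)) = sInf A :=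
      le_antisymm (sInf_le_sInf hsub) (le_sInf fun z hz => hz.le)
    rw [hlc _ hIoi]
    apply le_antisymm
    · refine iSup₂_le fun z hz => ?_
      obtain ⟨w, hw, hwz⟩ := sInf_lt_iff.1 hz
      exact (ha hwz.le).trans (le_biSup f hw)
    · exact iSup₂_le fun x hx => le_biSup f (hsub hx)

theorem Phi_cont {f : D → ℝ≥0∞} {c : ℝ≥0∞} (ha : Antitone f) (hlc : LCf f)
    (hfc : f ⊥ ≤ c) (hc1 : c ≤ 1) :
    ∀ 𝒰 : Set (Set D), (∀ U ∈ 𝒰, ScottOpen U) → 𝒰.Nonempty →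
      DirectedOn (· ⊆ ·) 𝒰 → Phi f c (⋃₀ 𝒰) = ⨆ U ∈ 𝒰, Phi f c U := by
  intro 𝒰 hop hne _
  have hcne : c ≠ ∞ := (hc1.trans_lt one_lt_top).ne
  by_cases huniv : univ ∈ 𝒰
  · have h1 : ⋃₀ 𝒰 = univ := univ_subset_iff.1 (subset_sUnion_of_mem huniv)
    rw [h1, Phi_apply_univ hcne]
    refine le_antisymm ?_ (iSup₂_le fun U _ => ?_)
    · have h2 := le_biSup (fun U => Phi f c U) huniv
      rwa [Phi_apply_univ hcne] at h2
    · calc (Phi f c) U ≤ (Phi f c) univ := measure_mono (subset_univ U)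
        _ = c := Phi_apply_univ hcne
  · have hA : 𝒰 = Ioi '' {x : D | Ioi x ∈ 𝒰} := by
      apply subset_antisymm
      · intro U hU
        rcases scottOpen_iff.1 (hop U hU) with h | ⟨x, rfl⟩
        · exact absurd (h ▸ hU) huniv
        · exact mem_image_of_mem _ hU
      · rintro U ⟨x, hx, rfl⟩
        exact hx
    rw [hA, sUnion_image, biUnion_Ioi, Phi_apply_Ioi ha hlc hfc hc1, iSup_image]
    rw [biSup_congr fun y (_ : y ∈ {x : D | Ioi x ∈ 𝒰}) => Phi_apply_Ioi ha hlc hfc hc1 y]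
    exact lcf_biInf ha hlc _

noncomputable def PhiS (f : D → ℝ≥0∞) (c : ℝ≥0∞) (ha : Antitone f) (hlc : LCf f)
    (hfc : f ⊥ ≤ c) (hc1 : c ≤ 1) : SProb D :=
  ⟨Phi f c, by rw [Phi_apply_univ (hc1.trans_lt one_lt_top).ne]; exact hc1,
   Phi_cont ha hlc hfc hc1⟩

theorem PhiS_Ioi {f : D → ℝ≥0∞} {c : ℝ≥0∞} (ha : Antitone f) (hlc : LCf f)
    (hfc : f ⊥ ≤ c) (hc1 : c ≤ 1) (x : D) :
    (PhiS f c ha hlc hfc hc1).val (Ioi x) = f x := Phi_apply_Ioi ha hlc hfc hc1 x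

theorem PhiS_univ {f : D → ℝ≥0∞} {c : ℝ≥0∞} (ha : Antitone f) (hlc : LCf f)
    (hfc : f ⊥ ≤ c) (hc1 : c ≤ 1) :
    (PhiS f c ha hlc hfc hc1).val univ = c := Phi_apply_univ (hc1.trans_lt one_lt_top).ne

def ccdf (μ : SProb D) : D → ℝ≥0∞ := fun x => μ.val (Ioi x)

theorem ccdf_antitone (μ : SProb D) : Antitone (ccdf μ) := fun _ _ hab =>
  measure_mono (Ioi_subset_Ioi hab)

theorem ccdf_lcf (μ : SProb D) : LCf (ccdf μ) := by
  intro x hx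
  rcases eq_empty_or_nonempty (Ioi x) with he | hne
  · simp [ccdf, he]
  · have h := μ.2.2 (Ioi '' Ioi x) ?_ ?_ ?_
    · rw [sUnion_image, biUnion_Ioi, hx] at h
      rw [ccdf] at *
      rw [h, iSup_image]
      rfl
    · rintro U ⟨z, _, rfl⟩; exact scottOpen_Ioi z
    · exact hne.image _
    · rintro U ⟨z1, hz1, rfl⟩ V ⟨z2, hz2, rfl⟩
      rcases le_total z1 z2 with hz | hz
      · exact ⟨Ioi z1, mem_image_of_mem _ hz1, le_rfl, Ioi_subset_Ioi hz⟩
      · exact ⟨Ioi z2, mem_image_of_mem _ hz2, Ioi_subset_Ioi hz, le_rfl⟩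

theorem sprobLe_iff {μ ν : SProb D} : SProbLe μ ν ↔
    ((∀ x, ccdf μ x ≤ ccdf ν x) ∧ μ.val univ ≤ ν.val univ) := by
  constructor
  · exact fun h => ⟨fun x => h _ (scottOpen_Ioi x), h _ scottOpen_univ⟩
  · rintro ⟨h1, h2⟩ U hU
    rcases scottOpen_iff.1 hU with rfl | ⟨x, rfl⟩
    exacts [h2, h1 x]

theorem sprobLe_refl (μ : SProb D) : SProbLe μ μ := fun _ _ => le_rfl

theorem sprob_ext {μ ν : SProb D} (h : ∀ U, ScottOpen U → μ.val U = ν.val U) : μ = ν := by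
  apply Subtype.ext
  have hfin : @IsFiniteMeasure D (scottMS D) μ.val :=
    ⟨lt_of_le_of_lt μ.2.1 one_lt_top⟩
  refine @MeasureTheory.ext_of_generate_finite D (scottMS D) μ.val ν.val
    {U | ScottOpen U} rfl ?_ hfin (fun s hs => h s hs) (h univ scottOpen_univ)
  · rintro U hU V hV -
    rcases scottOpen_iff.1 hU with rfl | ⟨x, rfl⟩
    · rw [univ_inter]; exact hV
    rcases scottOpen_iff.1 hV with rfl | ⟨y, rfl⟩
    · rw [inter_univ]; exact scottOpen_Ioi x
    · rw [Ioi_inter_Ioi]; exact scottOpen_Ioi (x ⊔ y)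

/-- the pointwise supremum of a set of subprobability valuations -/
noncomputable def supS (S : Set (SProb D)) : SProb D :=
  PhiS (fun x => ⨆ μ ∈ S, ccdf μ x) (⨆ μ ∈ S, μ.val univ)
    (fun a b hab => iSup₂_mono fun μ _ => ccdf_antitone μ hab)
    (by
      intro x hx
      apply le_antisymm
      · refine iSup₂_le fun μ hμ => ?_
        rw [ccdf_lcf μ x hx]
        refine iSup₂_le fun z hz => ?_
        exact (le_biSup (fun μ' => ccdf μ' z) hμ |>.trans
          (le_biSup (fun z => ⨆ μ' ∈ S, ccdf μ' z) hz))
      · refine iSup₂_le fun z hz => iSup₂_le fun μ hμ => ?_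
        exact (ccdf_antitone μ hz.le).trans (le_biSup (fun μ' => ccdf μ' x) hμ))
    (iSup₂_mono fun μ _ => measure_mono (subset_univ _))
    (iSup₂_le fun μ _ => μ.2.1)

theorem supS_ccdf (S : Set (SProb D)) (x : D) :
    ccdf (supS S) x = ⨆ μ ∈ S, ccdf μ x := PhiS_Ioi _ _ _ _ _

theorem supS_univ (S : Set (SProb D)) :
    (supS S).val univ = ⨆ μ ∈ S, μ.val univ := PhiS_univ _ _ _ _

theorem supS_isLub (S : Set (SProb D)) : IsLubRel SProbLe S (supS S) := by
  constructor
  · intro ν hν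
    rw [sprobLe_iff]
    constructor
    · intro x
      rw [supS_ccdf S x]
      exact le_biSup (fun μ' => ccdf μ' x) hν
    · rw [supS_univ]
      exact le_biSup (fun μ' : SProb D => μ'.val univ) hν
  · intro b hb
    rw [sprobLe_iff]
    constructor
    · intro x
      rw [supS_ccdf S x]
      exact iSup₂_le fun μ hμ => (sprobLe_iff.1 (hb μ hμ)).1 x
    · rw [supS_univ]
      exact iSup₂_le fun μ hμ => (sprobLe_iff.1 (hb μ hμ)).2

end SP2

namespace SP3
open Set MeasureTheory ENNReal SP SP2

variable {D : Type*} [CompleteLinearOrder D]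

theorem sprobLe_trans {μ ν σ : SProb D} (h1 : SProbLe μ ν) (h2 : SProbLe ν σ) :
    SProbLe μ σ := fun U hU => (h1 U hU).trans (h2 U hU)

theorem wayBelow_bot (y : D) : WayBelow ⊥ y := fun S hS _ _ _ _ => by
  obtain ⟨s, hs⟩ := hS
  exact ⟨s, hs, bot_le⟩

theorem wayBelow_le {b y : D} (h : WayBelow b y) : b ≤ y := by
  obtain ⟨s, hs, hbs⟩ := h {y} ⟨y, rfl⟩ (chain_directedOn _) y isLUB_singleton le_rfl
  rw [mem_singleton_iff] at hs
  exact hs ▸ hbs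

theorem wayBelow_of_le_left {x a y : D} (hxa : x ≤ a) (h : WayBelow a y) : WayBelow x y :=
  fun S hS hdir d hd hyd => by
    obtain ⟨s, hs, has⟩ := h S hS hdir d hd hyd
    exact ⟨s, hs, hxa.trans has⟩

theorem wayBelow_of_le_right {b y z : D} (h : WayBelow b y) (hyz : y ≤ z) : WayBelow b z :=
  fun S hS hdir d hd hzd => h S hS hdir d hd (hyz.trans hzd)

section Basis
variable {B : Set D}
  (hbasis : ∀ y : D, DirectedOn (· ≤ ·) {b ∈ B | WayBelow b y} ∧
      IsLUB {b ∈ B | WayBelow b y} y)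

include hbasis

theorem interp {b d : D} (hbd : WayBelow b d) : ∃ c, WayBelow b c ∧ WayBelow c d := by
  set T := {a ∈ B | ∃ c₀ ∈ B, WayBelow a c₀ ∧ WayBelow c₀ d} with hT
  have hub : ∀ u, (∀ a ∈ T, a ≤ u) → d ≤ u := by
    intro u hu
    refine (hbasis d).2.2 fun c hc => ?_
    refine (hbasis c).2.2 fun a ha => ?_
    exact hu a ⟨ha.1, c, hc.1, ha.2, hc.2⟩
  by_cases hTne : T.Nonempty
  · have hlub : IsLUB T d := by
      constructor
      · rintro a ⟨_, c₀, _, hac, hcd⟩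
        exact (wayBelow_le hac).trans (wayBelow_le hcd)
      · exact fun u hu => hub u hu
    obtain ⟨a, haT, hba⟩ := hbd T hTne (chain_directedOn _) d hlub le_rfl
    obtain ⟨_, c₀, _, hac, hcd⟩ := haT
    exact ⟨c₀, wayBelow_of_le_left hba hac, hcd⟩
  · have hdbot : d = ⊥ := le_bot_iff.1 (hub ⊥ (fun a ha => absurd ⟨a, ha⟩ hTne))
    have hbbot : b = ⊥ := le_bot_iff.1 (hdbot ▸ wayBelow_le hbd)
    exact ⟨⊥, by rw [hbbot]; exact wayBelow_bot ⊥, wayBelow_bot d⟩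

theorem scottOpen_wayUp (b : D) : ScottOpen {y | WayBelow b y} := by
  constructor
  · exact fun y z hyz hy => wayBelow_of_le_right hy hyz
  · intro S hS hdir d hd hbd
    obtain ⟨c, hbc, hcd⟩ := interp hbasis hbd
    obtain ⟨s, hs, hcs⟩ := hcd S hS hdir d hd le_rfl
    exact ⟨s, hs, wayBelow_of_le_right hbc hcs⟩

theorem biUnion_wayUp (x : D) : ⋃ b ∈ Ioi x, {y | WayBelow b y} = Ioi x := by
  ext y
  simp only [mem_iUnion, mem_Ioi, exists_prop, mem_setOf_eq]
  constructor
  · rintro ⟨b, hxb, hby⟩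
    exact lt_of_lt_of_le hxb (wayBelow_le hby)
  · intro hxy
    by_contra h
    push_neg at h
    have hyx : y ≤ x := (hbasis y).2.2 fun a ha =>
      le_of_not_gt fun hxa => (h a hxa) ha.2
    exact absurd (lt_of_lt_of_le hxy hyx) (lt_irrefl x)

end Basis
end SP3

namespace SP4
open Set MeasureTheory ENNReal SP SP2 SP3

variable {D : Type*} [CompleteLinearOrder D]

theorem upperSet_total {U V : Set D} (hU : IsUpperSet U) (hV : IsUpperSet V) :
    U ⊆ V ∨ V ⊆ U := by
  by_cases h : U ⊆ V
  · exact Or.inl h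
  · right
    obtain ⟨u, huU, huV⟩ := not_subset.1 h
    intro v hvV
    rcases le_total u v with hle | hle
    · exact hU hle huU
    · exact absurd (hV hle hvV) huV

theorem supS_open (S : Set (SProb D)) {U : Set D} (hU : ScottOpen U) :
    (supS S).val U = ⨆ μ ∈ S, μ.val U := by
  rcases scottOpen_iff.1 hU with rfl | ⟨x, rfl⟩
  · exact supS_univ S
  · exact supS_ccdf S x

section Basis
variable {B : Set D}
  (hbasis : ∀ y : D, DirectedOn (· ≤ ·) {b ∈ B | WayBelow b y} ∧
      IsLUB {b ∈ B | WayBelow b y} y)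
include hbasis

theorem mu_Ioi_sup (μ : SProb D) (x : D) (hne : (Ioi x).Nonempty) :
    μ.val (Ioi x) = ⨆ b ∈ Ioi x, μ.val {y | WayBelow b y} := by
  have h := μ.2.2 ((fun b => {y | WayBelow b y}) '' Ioi x) ?_ (hne.image _) ?_
  · rw [sUnion_image, biUnion_wayUp hbasis x] at h
    rw [h, iSup_image]
  · rintro U ⟨b, _, rfl⟩
    exact scottOpen_wayUp hbasis b
  · rintro U ⟨b1, _, rfl⟩ V ⟨b2, hb2, rfl⟩
    have h1 : IsUpperSet {y : D | WayBelow b1 y} := fun y z hyz hy =>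
      wayBelow_of_le_right hy hyz
    have h2 : IsUpperSet {y : D | WayBelow b2 y} := fun y z hyz hy =>
      wayBelow_of_le_right hy hyz
    rcases upperSet_total h1 h2 with hs | hs
    · exact ⟨_, mem_image_of_mem _ hb2, hs, le_rfl⟩
    · exact ⟨_, mem_image_of_mem _ ‹b1 ∈ Ioi x›, le_rfl, hs⟩

end Basis

/-- A weighted point mass as an element of `SProb D`. -/
noncomputable def pointS (b : D) (r : ℝ≥0∞) (hr : r ≤ 1) : SProb D :=
  PhiS (fun z => if z < b then r else 0) r
    (by
      intro a a' haa'
      simp only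
      by_cases h : a' < b
      · rw [if_pos h, if_pos (lt_of_le_of_lt haa' h)]
      · rw [if_neg h]
        exact zero_le)
    (by
      intro x hx
      simp only
      by_cases hxb : x < b
      · rw [if_pos hxb]
        apply le_antisymm
        · obtain ⟨z, hz, hzb⟩ := sInf_lt_iff.1 (show sInf (Ioi x) < b by rw [hx]; exact hxb)
          have h5 := le_biSup (fun z => if z < b then r else 0) hz
          rwa [if_pos hzb] at h5
        · refine iSup₂_le fun z _ => ?_
          by_cases h : z < b
          · rw [if_pos h]
          · rw [if_neg h]; exact zero_le
      · rw [if_neg hxb]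
        refine le_antisymm zero_le (iSup₂_le fun z hz => ?_)
        rw [if_neg (not_lt.2 ((not_lt.1 hxb).trans hz.le))]
    )
    (by
      by_cases h : (⊥ : D) < b
      · rw [if_pos h]
      · rw [if_neg h]; exact zero_le)
    hr

theorem pointS_ccdf (b : D) (r : ℝ≥0∞) (hr : r ≤ 1) (z : D) :
    ccdf (pointS b r hr) z = if z < b then r else 0 := PhiS_Ioi _ _ _ _ z

theorem pointS_univ (b : D) (r : ℝ≥0∞) (hr : r ≤ 1) :
    (pointS b r hr).val univ = r := PhiS_univ _ _ _ _

section Basis2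
variable {B : Set D}
  (hbasis : ∀ y : D, DirectedOn (· ≤ ·) {b ∈ B | WayBelow b y} ∧
      IsLUB {b ∈ B | WayBelow b y} y)
include hbasis

theorem point_wayBelow {μ : SProb D} {b : D} {r : ℝ≥0∞} (hr1 : r ≤ 1)
    (hr : r < μ.val {y | WayBelow b y}) :
    WayBelowRel SProbLe (pointS b r hr1) μ := by
  intro S hSne hSdir d hlub hμd
  have hdm : SProbLe d (supS S) := hlub.2 (supS S) (supS_isLub S).1
  have h2 : μ.val {y | WayBelow b y} ≤ (supS S).val {y | WayBelow b y} :=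
    sprobLe_trans hμd hdm _ (scottOpen_wayUp hbasis b)
  rw [supS_open S (scottOpen_wayUp hbasis b)] at h2
  have h3 : r < ⨆ σ ∈ S, σ.val {y | WayBelow b y} := hr.trans_le h2
  obtain ⟨σ, h4⟩ := lt_iSup_iff.1 h3
  obtain ⟨hσS, hσ⟩ := lt_iSup_iff.1 h4
  refine ⟨σ, hσS, ?_⟩
  rw [sprobLe_iff]
  constructor
  · intro z
    rw [pointS_ccdf]
    by_cases hzb : z < b
    · rw [if_pos hzb]
      calc r ≤ σ.val {y | WayBelow b y} := hσ.le
        _ ≤ σ.val (Ioi z) := measure_mono fun y hy => lt_of_lt_of_le hzb (wayBelow_le hy)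
    · rw [if_neg hzb]; exact zero_le
  · rw [pointS_univ]
    exact hσ.le.trans (measure_mono (subset_univ _))

end Basis2

theorem wayBelow_join {μ ν₁ ν₂ : SProb D} (h1 : WayBelowRel SProbLe ν₁ μ)
    (h2 : WayBelowRel SProbLe ν₂ μ) :
    ∃ ν₃ : SProb D, WayBelowRel SProbLe ν₃ μ ∧ SProbLe ν₁ ν₃ ∧ SProbLe ν₂ ν₃ := by
  refine ⟨supS {ν₁, ν₂}, ?_, ?_, ?_⟩
  · intro S hSne hSdir d hlub hμd
    obtain ⟨σ₁, hσ₁S, hν₁⟩ := h1 S hSne hSdir d hlub hμd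
    obtain ⟨σ₂, hσ₂S, hν₂⟩ := h2 S hSne hSdir d hlub hμd
    obtain ⟨σ₃, hσ₃S, hs₁, hs₂⟩ := hSdir σ₁ hσ₁S σ₂ hσ₂S
    refine ⟨σ₃, hσ₃S, (supS_isLub {ν₁, ν₂}).2 σ₃ ?_⟩
    rintro ν (rfl | rfl)
    · exact sprobLe_trans hν₁ hs₁
    · exact sprobLe_trans hν₂ hs₂
  · exact (supS_isLub {ν₁, ν₂}).1 ν₁ (mem_insert _ _)
  · exact (supS_isLub {ν₁, ν₂}).1 ν₂ (mem_insert_of_mem _ rfl)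

end SP4

namespace SP5
open Set MeasureTheory ENNReal SP SP2 SP3 SP4

variable {D : Type*} [CompleteLinearOrder D]

theorem main (B : Set D) (hBcount : B.Countable)
    (hbasis : ∀ y : D, DirectedOn (· ≤ ·) {b ∈ B | WayBelow b y} ∧
      IsLUB {b ∈ B | WayBelow b y} y)
    (hcompact : ∀ k : D, WayBelow k k → k = ⊥) :
    (∀ μ ν : SProb D, SProbLe μ ν → SProbLe ν μ → μ = ν) ∧
    (∀ S : Set (SProb D), ∃ m : SProb D, IsLubRel SProbLe S m) ∧
    (∀ S : Set (SProb D), ∃ m : SProb D,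
      (∀ s ∈ S, SProbLe m s) ∧ ∀ b : SProb D, (∀ s ∈ S, SProbLe b s) → SProbLe b m) ∧
    (∀ μ : SProb D, DirectedOn SProbLe {ν : SProb D | WayBelowRel SProbLe ν μ} ∧
      IsLubRel SProbLe {ν : SProb D | WayBelowRel SProbLe ν μ} μ) := by
  refine ⟨?_, ?_, ?_, ?_⟩
  · intro μ ν h1 h2
    exact sprob_ext fun U hU => le_antisymm (h1 U hU) (h2 U hU)
  · intro S
    exact ⟨supS S, supS_isLub S⟩
  · intro S
    refine ⟨supS {b | ∀ s ∈ S, SProbLe b s}, ?_, ?_⟩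
    · intro s hs
      exact (supS_isLub _).2 s fun l hl => hl s hs
    · intro b hb
      exact (supS_isLub _).1 b hb
  · intro μ
    constructor
    · intro ν₁ h1 ν₂ h2
      obtain ⟨ν₃, h3, h13, h23⟩ := wayBelow_join h1 h2
      exact ⟨ν₃, h3, h13, h23⟩
    constructor
    · intro ν hν
      have hdir : DirectedOn SProbLe ({μ} : Set (SProb D)) := by
        intro a ha c hc
        rw [mem_singleton_iff] at ha hc
        exact ⟨μ, rfl, by rw [ha]; exact sprobLe_refl μ, by rw [hc]; exact sprobLe_refl μ⟩
      have hlub : IsLubRel SProbLe ({μ} : Set (SProb D)) μ := by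
        constructor
        · intro s hs
          rw [mem_singleton_iff] at hs
          rw [hs]; exact sprobLe_refl μ
        · exact fun b hb => hb μ rfl
      obtain ⟨s, hs, hle⟩ := hν {μ} ⟨μ, rfl⟩ hdir μ hlub (sprobLe_refl μ)
      rw [mem_singleton_iff] at hs
      rw [← hs]; exact hle
    · intro b hb
      rw [sprobLe_iff]
      constructor
      · intro x
        by_contra hlt
        rw [not_le] at hlt
        have hne : (Ioi x).Nonempty := by
          by_contra hem
          rw [not_nonempty_iff_eq_empty] at hem
          have hz : ccdf μ x = 0 := by
            show μ.val (Ioi x) = 0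
            rw [hem]; exact measure_empty
          rw [hz] at hlt
          simp at hlt
        have h := mu_Ioi_sup hbasis μ x hne
        rw [show ccdf μ x = μ.val (Ioi x) from rfl, h] at hlt
        obtain ⟨w, hw⟩ := lt_iSup_iff.1 hlt
        obtain ⟨hwx, hw2⟩ := lt_iSup_iff.1 hw
        obtain ⟨r, hr1, hr2⟩ := exists_between hw2
        have hr1' : r ≤ 1 := hr2.le.trans ((measure_mono (subset_univ _)).trans μ.2.1)
        have hp := point_wayBelow hbasis hr1' hr2
        have hle := hb _ hp
        have h6 := (sprobLe_iff.1 hle).1 x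
        rw [pointS_ccdf, if_pos (show x < w from hwx)] at h6
        exact absurd (h6.trans_lt hr1) (lt_irrefl r)
      · by_contra hlt
        rw [not_le] at hlt
        have hwayb : {y : D | WayBelow (⊥ : D) y} = univ := eq_univ_of_forall fun y => wayBelow_bot y
        obtain ⟨r, hr1, hr2⟩ := exists_between hlt
        have hr2' : r < μ.val {y | WayBelow (⊥ : D) y} := by rw [hwayb]; exact hr2
        have hr1' : r ≤ 1 := hr2.le.trans μ.2.1
        have hp := point_wayBelow hbasis hr1' hr2'
        have hle := hb _ hp
        have h6 := (sprobLe_iff.1 hle).2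
        rw [pointS_univ] at h6
        exact absurd (h6.trans_lt hr1) (lt_irrefl r)

end SP5


/-- If `D` is a countably based complete chain whose only compact element is `⊥`, then
`SProb D`, in the stochastic order, is a continuous lattice: the order is antisymmetric,
every subset has a least upper bound and a greatest lower bound, and every element is the
directed supremum of the elements way below it. -/
theorem stmt8 {D : Type*} [CompleteLinearOrder D]
    (B : Set D) (hBcount : B.Countable)
    (hbasis : ∀ y : D, DirectedOn (· ≤ ·) {b ∈ B | WayBelow b y} ∧
      IsLUB {b ∈ B | WayBelow b y} y)
    (hcompact : ∀ k : D, WayBelow k k → k = ⊥) :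
    (∀ μ ν : SProb D, SProbLe μ ν → SProbLe ν μ → μ = ν) ∧
    (∀ S : Set (SProb D), ∃ m : SProb D, IsLubRel SProbLe S m) ∧
    (∀ S : Set (SProb D), ∃ m : SProb D, IsGlbRel SProbLe S m) ∧
    (∀ μ : SProb D, DirectedOn SProbLe {ν : SProb D | WayBelowRel SProbLe ν μ} ∧
      IsLubRel SProbLe {ν : SProb D | WayBelowRel SProbLe ν μ} μ) := by
  obtain ⟨h1, h2, h3, h4⟩ := SP5.main B hBcount hbasis hcompact
  refine ⟨h1, h2, fun S => ?_, h4⟩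
  obtain ⟨m, hm1, hm2⟩ := h3 S
  exact ⟨m, hm1, hm2⟩
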